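/- If φ : [a,b] → ℝ is continuous and right-differentiable at all but countably many points of [a,b], then φ is ACG* on [a,b] (generalized absolutely continuous in the restricted sense). -/

import Mathlib

open Filter Set Topology MeasureTheory

/-- Lower right Dini derivative of a real-valued function. -/
noncomputable def DlowR (φ : ℝ → ℝ) (t : ℝ) : EReal :=
  Filter.liminf (fun s : ℝ => (((φ (t + s) - φ t) / s : ℝ) : EReal))
    (nhdsWithin 0 (Set.Ioi 0))

/-- Oscillation of `φ` on the interval `[c,d]`. -/
noncomputable def osc (φ : ℝ → ℝ) (c d : ℝ) : ℝ :=
  sSup {r | ∃ x y : ℝ, c ≤ x ∧ x ≤ y ∧ y ≤ d ∧ r = |φ y - φ x|}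

/-- A finite family of intervals `[c i, d i]` is non-overlapping with endpoints in `S`. -/
def GoodIntervals (S : Set ℝ) {n : ℕ} (c d : Fin n → ℝ) : Prop :=
  (∀ i, c i ∈ S ∧ d i ∈ S ∧ c i ≤ d i) ∧
    Pairwise fun i j => d i ≤ c j ∨ d j ≤ c i

/-- `φ` is absolutely continuous (AC) on `S`. -/
def FnAC (φ : ℝ → ℝ) (S : Set ℝ) : Prop :=
  ∀ ε > 0, ∃ δ > 0, ∀ (n : ℕ) (c d : Fin n → ℝ),
    GoodIntervals S c d → (∑ i, (d i - c i)) < δ →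
      (∑ i, |φ (d i) - φ (c i)|) < ε

/-- `φ` is absolutely continuous in the restricted sense (AC*) on `S`. -/
def FnACstar (φ : ℝ → ℝ) (S : Set ℝ) : Prop :=
  ∀ ε > 0, ∃ δ > 0, ∀ (n : ℕ) (c d : Fin n → ℝ),
    GoodIntervals S c d → (∑ i, (d i - c i)) < δ →
      (∑ i, osc φ (c i) (d i)) < ε

/-- `φ` is generalized absolutely continuous (ACG) on `[a,b]`. -/
def FnACG (φ : ℝ → ℝ) (a b : ℝ) : Prop :=
  ContinuousOn φ (Set.Icc a b) ∧
    ∃ S : ℕ → Set ℝ, (⋃ n, S n) = Set.Icc a b ∧ ∀ n, FnAC φ (S n)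

/-- `φ` is generalized absolutely continuous in the restricted sense (ACG*) on `[a,b]`. -/
def FnACGstar (φ : ℝ → ℝ) (a b : ℝ) : Prop :=
  ContinuousOn φ (Set.Icc a b) ∧
    ∃ S : ℕ → Set ℝ, (⋃ n, S n) = Set.Icc a b ∧ ∀ n, FnACstar φ (S n)

/-- `f` has Henstock–Kurzweil integral `I` on `[a,b]`. -/
def HasHKIntegral (f : ℝ → ℝ) (a b I : ℝ) : Prop :=
  ∀ ε > 0, ∃ δ : ℝ → ℝ, (∀ t ∈ Set.Icc a b, 0 < δ t) ∧
    ∀ (n : ℕ) (x : Fin (n + 1) → ℝ) (t : Fin n → ℝ),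
      Monotone x → x 0 = a → x (Fin.last n) = b →
      (∀ i : Fin n, t i ∈ Set.Icc (x i.castSucc) (x i.succ)) →
      (∀ i : Fin n, x i.succ - x i.castSucc < δ (t i)) →
      |(∑ i : Fin n, f (t i) * (x i.succ - x i.castSucc)) - I| < ε

/-- Auxiliary: oscillation bound from a one-sided bound at the left endpoint. -/
lemma osc_le_two_mul {φ : ℝ → ℝ} {c d M : ℝ} (hM : 0 ≤ M)
    (h : ∀ x, c ≤ x → x ≤ d → |φ x - φ c| ≤ M) :
    osc φ c d ≤ 2 * M := by
  apply Real.sSup_le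
  · rintro r ⟨x, y, hcx, hxy, hyd, rfl⟩
    have h1 := h x hcx (hxy.trans hyd)
    have h2 := h y (hcx.trans hxy) hyd
    have hxy' : φ y - φ x = (φ y - φ c) - (φ x - φ c) := by ring
    calc |φ y - φ x| = |(φ y - φ c) - (φ x - φ c)| := by rw [hxy']
      _ ≤ |φ y - φ c| + |φ x - φ c| := abs_sub _ _
      _ ≤ 2 * M := by linarith
  · linarith

lemma osc_self_nonpos (φ : ℝ → ℝ) (c : ℝ) : osc φ c c ≤ 0 := by
  apply Real.sSup_le _ le_rfl
  rintro r ⟨x, y, hcx, hxy, hyd, rfl⟩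
  have hx : x = c := le_antisymm (hxy.trans hyd) hcx
  have hy : y = c := le_antisymm hyd (hcx.trans hxy)
  simp [hx, hy]

/-- FnACstar holds on any subsingleton set. -/
lemma fnACstar_of_subsingleton {φ : ℝ → ℝ} {S : Set ℝ}
    (hS : ∀ x ∈ S, ∀ y ∈ S, x = y) : FnACstar φ S := by
  intro ε hε
  refine ⟨1, one_pos, fun n c d hg _ => ?_⟩
  have : ∀ i, osc φ (c i) (d i) ≤ 0 := by
    intro i
    obtain ⟨hc, hd, _⟩ := hg.1 i
    have : c i = d i := hS _ hc _ hd
    rw [this]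
    exact osc_self_nonpos φ (d i)
  calc (∑ i, osc φ (c i) (d i)) ≤ ∑ i, (0:ℝ) := Finset.sum_le_sum fun i _ => this i
    _ = 0 := by simp
    _ < ε := hε

/-- FnACstar is antitone in the set. -/
lemma fnACstar_mono {φ : ℝ → ℝ} {S T : Set ℝ} (hST : S ⊆ T)
    (h : FnACstar φ T) : FnACstar φ S := by
  intro ε hε
  obtain ⟨δ, hδ, hδ'⟩ := h ε hε
  refine ⟨δ, hδ, fun n c d hg hs => hδ' n c d ⟨fun i => ?_, hg.2⟩ hs⟩
  obtain ⟨hc, hd, hcd⟩ := hg.1 i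
  exact ⟨hST hc, hST hd, hcd⟩

/-- FnACstar on the Lipschitz-type set intersected with a short interval. -/
lemma fnACstar_lip (φ : ℝ → ℝ) (n : ℕ) (u v : ℝ) (huv : v - u ≤ 1/(n+1)) :
    FnACstar φ ({t : ℝ | ∀ s : ℝ, 0 < s → s ≤ 1/(n+1) → |φ (t+s) - φ t| ≤ (n+1) * s}
      ∩ Set.Icc u v) := by
  intro ε hε
  have hn1 : (0:ℝ) < (n:ℝ) + 1 := by positivity
  refine ⟨ε / (2*n+3), by positivity, fun N c d hg hs => ?_⟩
  have key : ∀ i, osc φ (c i) (d i) ≤ 2 * ((n+1) * (d i - c i)) := by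
    intro i
    obtain ⟨⟨hcL, hcI⟩, ⟨hdL, hdI⟩, hcd⟩ := hg.1 i
    have hlen : d i - c i ≤ 1/(n+1) := by
      have := hcI.1; have := hdI.2; linarith
    apply osc_le_two_mul (by nlinarith)
    intro x hcx hxd
    rcases eq_or_lt_of_le hcx with heq | hlt
    · rw [← heq]
      simp only [sub_self, abs_zero]
      nlinarith
    · have hs0 : 0 < x - c i := by linarith
      have hs1 : x - c i ≤ 1/(n+1) := by linarith
      have := hcL (x - c i) hs0 hs1
      have hx : c i + (x - c i) = x := by ring
      rw [hx] at this
      nlinarith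
  have hsum : (∑ i, osc φ (c i) (d i)) ≤ 2 * ((n:ℝ)+1) * (∑ i, (d i - c i)) := by
    calc (∑ i, osc φ (c i) (d i)) ≤ ∑ i, 2 * (((n:ℝ)+1) * (d i - c i)) :=
          Finset.sum_le_sum fun i _ => key i
      _ = 2 * ((n:ℝ)+1) * (∑ i, (d i - c i)) := by
          rw [Finset.mul_sum]; congr 1; ext i; ring
  have h2 : 2 * ((n:ℝ)+1) * (∑ i, (d i - c i)) < 2 * ((n:ℝ)+1) * (ε / (2*n+3)) := by
    apply mul_lt_mul_of_pos_left hs (by positivity)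
  have h3 : 2 * ((n:ℝ)+1) * (ε / (2*n+3)) < ε := by
    have h4 : (0:ℝ) < 2*(n:ℝ)+3 := by positivity
    rw [← mul_div_assoc, div_lt_iff₀ h4]
    nlinarith
  linarith

/-- If `φ` is continuous on `[a,b]` and right-differentiable at all but
countably many points of `[a,b]`, then `φ` is ACG* on `[a,b]`. -/

theorem stmt4 (φ : ℝ → ℝ) (a b : ℝ) (hab : a ≤ b)
    (hcont : ContinuousOn φ (Set.Icc a b))
    (C : Set ℝ) (hC : C.Countable)
    (hdiff : ∀ t ∈ Set.Icc a b \ C, ∃ L : ℝ,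
      Filter.Tendsto (fun s : ℝ => (φ (t + s) - φ t) / s)
        (nhdsWithin 0 (Set.Ioi 0)) (nhds L)) :
    FnACGstar φ a b := by
  refine ⟨hcont, ?_⟩
  obtain ⟨f, hf⟩ := Set.Countable.exists_eq_range (hC.insert a) (Set.insert_nonempty a C)
  set E : ℕ → ℕ → ℕ → Set ℝ := fun n k j =>
    ({t : ℝ | ∀ s : ℝ, 0 < s → s ≤ 1/(k+1) → |φ (t+s) - φ t| ≤ (k+1) * s}
      ∩ Set.Icc (a + j/(k+1)) (a + (j+1)/(k+1))) ∩ Set.Icc a b with hE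
  set F : (ℕ × ℕ × ℕ) ⊕ ℕ → Set ℝ :=
    Sum.elim (fun p => E p.1 p.2.1 p.2.2) (fun m => {f m} ∩ Set.Icc a b) with hF
  let e : ℕ ≃ ((ℕ × ℕ × ℕ) ⊕ ℕ) := (Denumerable.eqv ((ℕ × ℕ × ℕ) ⊕ ℕ)).symm
  refine ⟨fun m => F (e m), ?_, ?_⟩
  · rw [e.surjective.iUnion_comp F]
    apply Set.Subset.antisymm
    · apply Set.iUnion_subset
      rintro (⟨n, k, j⟩ | m)
      · exact Set.inter_subset_right
      · exact Set.inter_subset_right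
    · intro t ht
      by_cases htC : t ∈ C
      · have : t ∈ Set.range f := by rw [← hf]; exact Set.mem_insert_of_mem a htC
        obtain ⟨m, hm⟩ := this
        exact Set.mem_iUnion.2 ⟨Sum.inr m, ⟨hm.symm, ht⟩⟩
      · obtain ⟨L, hL⟩ := hdiff t ⟨ht, htC⟩
        -- find k with (k+1) ≥ |L| + 1 and 1/(k+1) small enough
        have h1 : ∀ᶠ s in nhdsWithin 0 (Set.Ioi 0),
            |(φ (t + s) - φ t) / s - L| < 1 := by
          have := Metric.tendsto_nhds.1 hL 1 one_pos
          simpa [Real.dist_eq] using this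
        rw [Filter.eventually_iff, Metric.mem_nhdsWithin_iff] at h1
        obtain ⟨δ, hδ, hδ'⟩ := h1
        obtain ⟨k₀, hk₀⟩ := exists_nat_one_div_lt hδ
        set k : ℕ := max k₀ ⌈|L|⌉₊ with hk
        have hkL : |L| ≤ (k:ℝ) := le_trans (Nat.le_ceil _)
          (by exact_mod_cast Nat.le_max_right k₀ ⌈|L|⌉₊)
        have hkδ : 1/((k:ℝ)+1) < δ := by
          apply lt_of_le_of_lt _ hk₀
          apply one_div_le_one_div_of_le (by positivity)
          have : (k₀:ℝ) ≤ (k:ℝ) := by exact_mod_cast Nat.le_max_left k₀ ⌈|L|⌉₊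
          linarith
        set j : ℕ := ⌊(t - a) * ((k:ℝ)+1)⌋₊ with hj
        refine Set.mem_iUnion.2 ⟨Sum.inl (0, k, j), ⟨⟨?_, ?_⟩, ht⟩⟩
        · intro s hs0 hs1
          have hdist : s ∈ Metric.ball (0:ℝ) δ := by
            rw [Metric.mem_ball, Real.dist_eq, sub_zero, abs_of_pos hs0]
            exact lt_of_le_of_lt hs1 hkδ
          have := hδ' ⟨hdist, hs0⟩
          simp only [Set.mem_setOf_eq] at this
          have habs : |(φ (t + s) - φ t) / s| < |L| + 1 := by
            calc |(φ (t + s) - φ t) / s|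
                ≤ |(φ (t + s) - φ t) / s - L| + |L| := by
                  have := abs_sub_abs_le_abs_sub ((φ (t + s) - φ t) / s) L
                  linarith [abs_nonneg ((φ (t + s) - φ t) / s - L)]
              _ < |L| + 1 := by linarith
          have hq : |φ (t + s) - φ t| = |(φ (t + s) - φ t) / s| * s := by
            rw [abs_div, abs_of_pos hs0, div_mul_cancel₀]
            exact ne_of_gt hs0
          rw [hq]
          have : |L| + 1 ≤ (k:ℝ) + 1 := by linarith
          nlinarith [abs_nonneg ((φ (t + s) - φ t) / s)]
        · have hta : 0 ≤ t - a := by linarith [ht.1]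
          have hk1 : (0:ℝ) < (k:ℝ) + 1 := by positivity
          constructor
          · have := Nat.floor_le (by positivity : (0:ℝ) ≤ (t - a) * ((k:ℝ)+1))
            rw [← hj] at this
            have : (j:ℝ)/((k:ℝ)+1) ≤ t - a := by
              rw [div_le_iff₀ hk1]; linarith
            linarith
          · have := Nat.lt_floor_add_one ((t - a) * ((k:ℝ)+1))
            rw [← hj] at this
            have : t - a < ((j:ℝ)+1)/((k:ℝ)+1) := by
              rw [lt_div_iff₀ hk1]; linarith
            linarith
  · rintro m
    rcases hme : e m with ⟨n, k, j⟩ | m'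
    · show FnACstar φ (F (e m))
      rw [hme]
      have : F (Sum.inl (n, k, j)) = E n k j := rfl
      rw [this, hE]
      apply fnACstar_mono (Set.inter_subset_left)
      have hlen : (a + ((j:ℝ)+1)/((k:ℝ)+1)) - (a + (j:ℝ)/((k:ℝ)+1)) ≤ 1/((k:ℝ)+1) := by
        have hk1 : (0:ℝ) < (k:ℝ) + 1 := by positivity
        have heq2 : (a + ((j:ℝ)+1)/((k:ℝ)+1)) - (a + (j:ℝ)/((k:ℝ)+1)) = 1/((k:ℝ)+1) := by
          field_simp
          ring
        linarith
      exact fnACstar_lip φ k _ _ hlen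
    · show FnACstar φ (F (e m))
      rw [hme]
      apply fnACstar_of_subsingleton
      rintro x ⟨hx, _⟩ y ⟨hy, _⟩
      simp only [Set.mem_singleton_iff] at hx hy
      rw [hx, hy]
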